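/- Let A ∈ ℝ^{m×n} have restricted isometry constant δ_k of order k. Then for every vector v ∈ ℝⁿ and every index set Γ ⊆ {1,…,n} with |Γ ∪ supp(v)| ≤ k, one has ‖((I − AᵀA)v)_Γ‖₂ ≤ δ_k · ‖v‖₂. -/
import Mathlib


open Matrix

/-- The Euclidean (ℓ₂) norm of a vector in ℝ^d. -/
noncomputable def l2 {d : ℕ} (v : Fin d → ℝ) : ℝ := Real.sqrt (∑ i, v i ^ 2)

/-- The restricted isometry constant of order `k` of a matrix `A`: the smallest `δ ≥ 0`
such that `(1 - δ)‖x‖² ≤ ‖Ax‖² ≤ (1 + δ)‖x‖²` for all `k`-sparse vectors `x`. -/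
noncomputable def RIC {m n : ℕ} (A : Matrix (Fin m) (Fin n) ℝ) (k : ℕ) : ℝ :=
  sInf {δ : ℝ | 0 ≤ δ ∧ ∀ x : Fin n → ℝ, (Function.support x).ncard ≤ k →
    (1 - δ) * l2 x ^ 2 ≤ l2 (A *ᵥ x) ^ 2 ∧ l2 (A *ᵥ x) ^ 2 ≤ (1 + δ) * l2 x ^ 2}

lemma l2_sq {d : ℕ} (x : Fin d → ℝ) : l2 x ^ 2 = x ⬝ᵥ x := by
  rw [l2, Real.sq_sqrt (Finset.sum_nonneg fun i _ => sq_nonneg _)]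
  simp [dotProduct, sq]

lemma l2_nonneg {d : ℕ} (x : Fin d → ℝ) : 0 ≤ l2 x := Real.sqrt_nonneg _

lemma dot_self_nonneg {d : ℕ} (x : Fin d → ℝ) : 0 ≤ x ⬝ᵥ x :=
  Finset.sum_nonneg fun i _ => mul_self_nonneg _

/-- Polarization-type RIP bound. -/
lemma rip_polar {m n k : ℕ} (A : Matrix (Fin m) (Fin n) ℝ) (δ : ℝ)
    (hδ : ∀ x : Fin n → ℝ, (Function.support x).ncard ≤ k →
      (1 - δ) * l2 x ^ 2 ≤ l2 (A *ᵥ x) ^ 2 ∧ l2 (A *ᵥ x) ^ 2 ≤ (1 + δ) * l2 x ^ 2)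
    (x y : Fin n → ℝ) (h : (Function.support x ∪ Function.support y).ncard ≤ k) :
    |x ⬝ᵥ y - (A *ᵥ x) ⬝ᵥ (A *ᵥ y)| ≤ δ / 2 * (x ⬝ᵥ x + y ⬝ᵥ y) := by
  have hsub : ∀ z : Fin n → ℝ, Function.support z ⊆ Function.support x ∪ Function.support y →
      (Function.support z).ncard ≤ k := fun z hz =>
    le_trans (Set.ncard_le_ncard hz (Set.toFinite _)) h
  have h1 := hδ (x + y) (hsub _ (Function.support_add _ _))
  have h2 := hδ (x - y) (hsub _ (Function.support_sub x y))
  rw [l2_sq, l2_sq] at h1 h2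
  rw [Matrix.mulVec_add] at h1
  rw [Matrix.mulVec_sub] at h2
  have e1 : (x + y) ⬝ᵥ (x + y) = x ⬝ᵥ x + 2 * (x ⬝ᵥ y) + y ⬝ᵥ y := by
    simp [dotProduct_add, add_dotProduct, dotProduct_comm y x]; ring
  have e2 : (x - y) ⬝ᵥ (x - y) = x ⬝ᵥ x - 2 * (x ⬝ᵥ y) + y ⬝ᵥ y := by
    simp [dotProduct_sub, sub_dotProduct, dotProduct_comm y x]; ring
  have e3 : (A *ᵥ x + A *ᵥ y) ⬝ᵥ (A *ᵥ x + A *ᵥ y) =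
      (A *ᵥ x) ⬝ᵥ (A *ᵥ x) + 2 * ((A *ᵥ x) ⬝ᵥ (A *ᵥ y)) + (A *ᵥ y) ⬝ᵥ (A *ᵥ y) := by
    simp [dotProduct_add, add_dotProduct, dotProduct_comm (A *ᵥ y) (A *ᵥ x)]; ring
  have e4 : (A *ᵥ x - A *ᵥ y) ⬝ᵥ (A *ᵥ x - A *ᵥ y) =
      (A *ᵥ x) ⬝ᵥ (A *ᵥ x) - 2 * ((A *ᵥ x) ⬝ᵥ (A *ᵥ y)) + (A *ᵥ y) ⬝ᵥ (A *ᵥ y) := by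
    simp [dotProduct_sub, sub_dotProduct, dotProduct_comm (A *ᵥ y) (A *ᵥ x)]; ring
  rw [e1, e3] at h1
  rw [e2, e4] at h2
  rw [abs_le]
  constructor <;> nlinarith [h1.1, h1.2, h2.1, h2.2]

/-- Scaled RIP bound. -/
lemma rip_bilin {m n k : ℕ} (A : Matrix (Fin m) (Fin n) ℝ) (δ : ℝ) (hδ0 : 0 ≤ δ)
    (hδ : ∀ x : Fin n → ℝ, (Function.support x).ncard ≤ k →
      (1 - δ) * l2 x ^ 2 ≤ l2 (A *ᵥ x) ^ 2 ∧ l2 (A *ᵥ x) ^ 2 ≤ (1 + δ) * l2 x ^ 2)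
    (x y : Fin n → ℝ) (h : (Function.support x ∪ Function.support y).ncard ≤ k) :
    |x ⬝ᵥ y - (A *ᵥ x) ⬝ᵥ (A *ᵥ y)| ≤ δ * l2 x * l2 y := by
  by_cases hx : l2 x = 0
  · have hx0 : x = 0 := by
      funext i
      have h' : ∑ j, x j ^ 2 = 0 :=
        le_antisymm (Real.sqrt_eq_zero'.mp hx)
          (Finset.sum_nonneg fun j _ => sq_nonneg _)
      have := (Finset.sum_eq_zero_iff_of_nonneg (fun j _ => sq_nonneg (x j))).mp h' i
        (Finset.mem_univ i)
      exact pow_eq_zero_iff (n := 2) (by norm_num) |>.mp (this)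
    subst hx0
    simp [l2]
  by_cases hy : l2 y = 0
  · have hy0 : y = 0 := by
      funext i
      have h' : ∑ j, y j ^ 2 = 0 :=
        le_antisymm (Real.sqrt_eq_zero'.mp hy)
          (Finset.sum_nonneg fun j _ => sq_nonneg _)
      have := (Finset.sum_eq_zero_iff_of_nonneg (fun j _ => sq_nonneg (y j))).mp h' i
        (Finset.mem_univ i)
      exact pow_eq_zero_iff (n := 2) (by norm_num) |>.mp (this)
    subst hy0
    simp [l2]
  have hxpos : 0 < l2 x := lt_of_le_of_ne (l2_nonneg x) (Ne.symm hx)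
  have hypos : 0 < l2 y := lt_of_le_of_ne (l2_nonneg y) (Ne.symm hy)
  set t : ℝ := Real.sqrt (l2 y / l2 x) with ht
  have htpos : 0 < t := Real.sqrt_pos.mpr (div_pos hypos hxpos)
  have ht2 : t ^ 2 = l2 y / l2 x := Real.sq_sqrt (le_of_lt (div_pos hypos hxpos))
  have hsupp : (Function.support (t • x) ∪ Function.support (t⁻¹ • y)).ncard ≤ k := by
    rw [Function.support_const_smul_of_ne_zero t x (ne_of_gt htpos),
      Function.support_const_smul_of_ne_zero t⁻¹ y (inv_ne_zero (ne_of_gt htpos))]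
    exact h
  have key := rip_polar A δ hδ (t • x) (t⁻¹ • y) hsupp
  have ed : (t • x) ⬝ᵥ (t⁻¹ • y) = x ⬝ᵥ y := by
    rw [smul_dotProduct, dotProduct_smul, smul_smul, mul_inv_cancel₀ (ne_of_gt htpos)]
    simp
  have eA : (A *ᵥ (t • x)) ⬝ᵥ (A *ᵥ (t⁻¹ • y)) = (A *ᵥ x) ⬝ᵥ (A *ᵥ y) := by
    rw [Matrix.mulVec_smul, Matrix.mulVec_smul, smul_dotProduct, dotProduct_smul, smul_smul,
      mul_inv_cancel₀ (ne_of_gt htpos)]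
    simp
  have exx : (t • x) ⬝ᵥ (t • x) = t ^ 2 * (x ⬝ᵥ x) := by
    rw [smul_dotProduct, dotProduct_smul, smul_smul]; simp [sq]
  have eyy : (t⁻¹ • y) ⬝ᵥ (t⁻¹ • y) = (t ^ 2)⁻¹ * (y ⬝ᵥ y) := by
    rw [smul_dotProduct, dotProduct_smul, smul_smul]; simp [sq]
  rw [ed, eA, exx, eyy, ht2] at key
  have hxx : x ⬝ᵥ x = l2 x ^ 2 := (l2_sq x).symm
  have hyy : y ⬝ᵥ y = l2 y ^ 2 := (l2_sq y).symm
  rw [hxx, hyy] at key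
  calc |x ⬝ᵥ y - (A *ᵥ x) ⬝ᵥ (A *ᵥ y)| ≤
      δ / 2 * (l2 y / l2 x * l2 x ^ 2 + (l2 y / l2 x)⁻¹ * l2 y ^ 2) := key
    _ = δ * l2 x * l2 y := by field_simp; ring

/-- The defining set of RIC is nonempty. -/
lemma ric_set_nonempty {m n k : ℕ} (A : Matrix (Fin m) (Fin n) ℝ) :
    {δ : ℝ | 0 ≤ δ ∧ ∀ x : Fin n → ℝ, (Function.support x).ncard ≤ k →
      (1 - δ) * l2 x ^ 2 ≤ l2 (A *ᵥ x) ^ 2 ∧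
      l2 (A *ᵥ x) ^ 2 ≤ (1 + δ) * l2 x ^ 2}.Nonempty := by
  set C : ℝ := ∑ i, ∑ j, A i j ^ 2 with hC
  have hC0 : 0 ≤ C := Finset.sum_nonneg fun i _ => Finset.sum_nonneg fun j _ => sq_nonneg _
  refine ⟨1 + C, by linarith, fun x _ => ?_⟩
  have hAx : l2 (A *ᵥ x) ^ 2 ≤ C * l2 x ^ 2 := by
    rw [l2_sq, l2_sq]
    have : ∀ i, (A *ᵥ x) i * (A *ᵥ x) i ≤ (∑ j, A i j ^ 2) * (x ⬝ᵥ x) := by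
      intro i
      have := Finset.sum_mul_sq_le_sq_mul_sq Finset.univ (fun j => A i j) x
      calc (A *ᵥ x) i * (A *ᵥ x) i = (∑ j, A i j * x j) ^ 2 := by
            simp [Matrix.mulVec, dotProduct, sq]
        _ ≤ (∑ j, A i j ^ 2) * ∑ j, x j ^ 2 := this
        _ = (∑ j, A i j ^ 2) * (x ⬝ᵥ x) := by simp [dotProduct, sq]
    calc (A *ᵥ x) ⬝ᵥ (A *ᵥ x) = ∑ i, (A *ᵥ x) i * (A *ᵥ x) i := rfl
      _ ≤ ∑ i, (∑ j, A i j ^ 2) * (x ⬝ᵥ x) := Finset.sum_le_sum fun i _ => this i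
      _ = C * (x ⬝ᵥ x) := by rw [hC, Finset.sum_mul]
  have h2 : 0 ≤ l2 (A *ᵥ x) ^ 2 := sq_nonneg _
  have h3 : 0 ≤ l2 x ^ 2 := sq_nonneg _
  constructor <;> nlinarith

/-- Main estimate for a fixed admissible δ. -/
lemma stmt1_aux {m n k : ℕ} (A : Matrix (Fin m) (Fin n) ℝ)
    (v : Fin n → ℝ) (Γ : Set (Fin n)) (hΓ : (Γ ∪ Function.support v).ncard ≤ k)
    (δ : ℝ) (hδ0 : 0 ≤ δ)
    (hδ : ∀ x : Fin n → ℝ, (Function.support x).ncard ≤ k →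
      (1 - δ) * l2 x ^ 2 ≤ l2 (A *ᵥ x) ^ 2 ∧ l2 (A *ᵥ x) ^ 2 ≤ (1 + δ) * l2 x ^ 2) :
    l2 (Γ.indicator ((1 - Aᵀ * A) *ᵥ v)) ≤ δ * l2 v := by
  set w : Fin n → ℝ := (1 - Aᵀ * A) *ᵥ v with hw
  set u : Fin n → ℝ := Γ.indicator w with hu
  have hsupp : (Function.support u ∪ Function.support v).ncard ≤ k := by
    refine le_trans (Set.ncard_le_ncard ?_ (Set.toFinite _)) hΓ
    exact Set.union_subset_union_left _ (Set.support_indicator_subset)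
  have huu : u ⬝ᵥ u = u ⬝ᵥ w := by
    apply Finset.sum_congr rfl
    intro i _
    by_cases hi : i ∈ Γ
    · simp [hu, Set.indicator_of_mem hi]
    · simp [hu, Set.indicator_of_notMem hi]
  have hw2 : u ⬝ᵥ w = u ⬝ᵥ v - (A *ᵥ u) ⬝ᵥ (A *ᵥ v) := by
    rw [hw, Matrix.sub_mulVec, Matrix.one_mulVec, dotProduct_sub]
    congr 1
    rw [← Matrix.mulVec_mulVec, Matrix.dotProduct_mulVec, Matrix.vecMul_transpose]
  have key := rip_bilin A δ hδ0 hδ u v hsupp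
  have h1 : l2 u ^ 2 ≤ δ * l2 u * l2 v := by
    rw [l2_sq, huu, hw2]
    calc u ⬝ᵥ v - (A *ᵥ u) ⬝ᵥ (A *ᵥ v) ≤ |u ⬝ᵥ v - (A *ᵥ u) ⬝ᵥ (A *ᵥ v)| := le_abs_self _
      _ ≤ δ * l2 u * l2 v := key
  by_cases hzero : l2 u = 0
  · rw [hzero]
    exact mul_nonneg hδ0 (l2_nonneg v)
  · have hupos : 0 < l2 u := lt_of_le_of_ne (l2_nonneg u) (Ne.symm hzero)
    nlinarith

/-- For any `v ∈ ℝⁿ` and any index set `Γ` with `|Γ ∪ supp v| ≤ k`,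
`‖((I - AᵀA)v)_Γ‖₂ ≤ δ_k ‖v‖₂`. -/
theorem stmt1 {m n k : ℕ} (A : Matrix (Fin m) (Fin n) ℝ)
    (v : Fin n → ℝ) (Γ : Set (Fin n)) (hΓ : (Γ ∪ Function.support v).ncard ≤ k) :
    l2 (Γ.indicator ((1 - Aᵀ * A) *ᵥ v)) ≤ RIC A k * l2 v := by
  set S := {δ : ℝ | 0 ≤ δ ∧ ∀ x : Fin n → ℝ, (Function.support x).ncard ≤ k →
    (1 - δ) * l2 x ^ 2 ≤ l2 (A *ᵥ x) ^ 2 ∧ l2 (A *ᵥ x) ^ 2 ≤ (1 + δ) * l2 x ^ 2} with hS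
  have hne : S.Nonempty := ric_set_nonempty A
  have hkey : ∀ δ ∈ S, l2 (Γ.indicator ((1 - Aᵀ * A) *ᵥ v)) ≤ δ * l2 v := fun δ hδ =>
    stmt1_aux A v Γ hΓ δ hδ.1 hδ.2
  by_cases hv : l2 v = 0
  · obtain ⟨δ₀, hδ₀⟩ := hne
    have := hkey δ₀ hδ₀
    rw [hv] at this ⊢
    simpa using this
  · have hvpos : 0 < l2 v := lt_of_le_of_ne (l2_nonneg v) (Ne.symm hv)
    have hRIC : l2 (Γ.indicator ((1 - Aᵀ * A) *ᵥ v)) / l2 v ≤ RIC A k := by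
      apply le_csInf hne
      intro δ hδ
      rw [div_le_iff₀ hvpos]
      exact hkey δ hδ
    rw [div_le_iff₀ hvpos] at hRIC
    exact hRIC
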